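/- In the weighted distributed Bellman–Ford algorithm, the index ℓ_v^{(r)}(d_s, s, w_s) of a triplet (d_s, s, w_s) within the lexicographically sorted proximity list of node v is non-decreasing in the round number r: triplets are only removed from the list when replaced by a lexicographically smaller triplet for the same source, so the number of triplets lexicographically smaller than a fixed triplet never decreases. -/

import Mathlib

/-- Lexicographic order on triplets `(d, s, w)`: first by distance `d`,
then by source `s`, then by weight `w`. -/
abbrev TripLt (a b : ℕ × ℕ × ℕ) : Prop :=
  a.1 < b.1 ∨ (a.1 = b.1 ∧ (a.2.1 < b.2.1 ∨ (a.2.1 = b.2.1 ∧ a.2.2 < b.2.2)))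

/-- **Positions in the proximity list are non-decreasing.**  `L r` is the
proximity list of a node at the start of round `r`, containing at most one
triplet per source, and a triplet may be removed in a round only if a
lexicographically smaller triplet with the same source is simultaneously
inserted.  Then, for every fixed triplet `t`, the number of triplets of the
list lexicographically smaller than `t` never decreases, i.e. the index of
`t` in the sorted list is non-decreasing with `r`. -/
theorem position_nondecreasing
    (L : ℕ → Finset (ℕ × ℕ × ℕ))
    (hsource : ∀ r, ∀ a ∈ L r, ∀ b ∈ L r, a.2.1 = b.2.1 → a = b)
    (hremove : ∀ r, ∀ a ∈ L r, a ∉ L (r + 1) →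
      ∃ a' ∈ L (r + 1), a'.2.1 = a.2.1 ∧ TripLt a' a)
    (t : ℕ × ℕ × ℕ) (r : ℕ) :
    ((L r).filter (fun u => TripLt u t)).card ≤
      ((L (r + 1)).filter (fun u => TripLt u t)).card := by
  classical
  have trans : ∀ x y z : ℕ × ℕ × ℕ, TripLt x y → TripLt y z → TripLt x z := by
    rintro ⟨x1, x2, x3⟩ ⟨y1, y2, y3⟩ ⟨z1, z2, z3⟩ hxy hyz
    dsimp only [TripLt] at *
    omega
  set f : ℕ × ℕ × ℕ → ℕ × ℕ × ℕ := fun a =>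
    if h : a ∈ L (r + 1) then a
    else if h2 : a ∈ L r then Classical.choose (hremove r a h2 h) else a with hf
  have hspec : ∀ a, a ∈ L r → a ∉ L (r + 1) →
      f a ∈ L (r + 1) ∧ (f a).2.1 = a.2.1 ∧ TripLt (f a) a := by
    intro a h2 h
    have := Classical.choose_spec (hremove r a h2 h)
    simp only [hf, dif_neg h, dif_pos h2]
    exact ⟨this.1, this.2.1, this.2.2⟩
  have hmem : ∀ a, a ∈ L r → f a ∈ L (r + 1) := by
    intro a ha
    by_cases h : a ∈ L (r + 1)
    · simp [hf, h]
    · exact (hspec a ha h).1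
  have hsrc : ∀ a, a ∈ L r → (f a).2.1 = a.2.1 := by
    intro a ha
    by_cases h : a ∈ L (r + 1)
    · simp [hf, h]
    · exact (hspec a ha h).2.1
  apply Finset.card_le_card_of_injOn f
  · intro a ha
    simp only [Finset.mem_coe, Finset.mem_filter] at ha ⊢
    refine ⟨hmem a ha.1, ?_⟩
    by_cases h : a ∈ L (r + 1)
    · simpa [hf, h] using ha.2
    · exact trans _ _ _ (hspec a ha.1 h).2.2 ha.2
  · intro a ha b hb hab
    simp only [Finset.coe_filter, Set.mem_setOf_eq] at ha hb
    apply hsource r a ha.1 b hb.1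
    have := hsrc a ha.1
    have := hsrc b hb.1
    rw [← hsrc a ha.1, ← hsrc b hb.1, hab]
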